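/- Let n1, n2 ≥ 2 be integers. For all regular languages L1 and L2 over a common finite alphabet Σ with sc(L1) ≤ n1 and sc(L2) ≤ n2, the state complexity of the Kleene star of their intersection satisfies sc((L1 ∩ L2)*) ≤ 3·2^(n1·n2−2). -/
import Mathlib

open Computability

/-- `L` is recognized by some complete DFA with exactly `n` states. -/
def recognizedBy {α : Type} (L : Language α) (n : ℕ) : Prop :=
  ∃ M : DFA α (Fin n), M.accepts = L

/-- The state complexity of a language: the minimal number of states of a
complete DFA recognizing it. -/
noncomputable def sc {α : Type} (L : Language α) : ℕ :=
  sInf {n | recognizedBy L n}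

section Basic
variable {Γ : Type} {σ σ1 σ2 : Type}

/-- Product DFA for intersection. -/
def prodDFA (M1 : DFA Γ σ1) (M2 : DFA Γ σ2) : DFA Γ (σ1 × σ2) where
  step p a := (M1.step p.1 a, M2.step p.2 a)
  start := (M1.start, M2.start)
  accept := {p | p.1 ∈ M1.accept ∧ p.2 ∈ M2.accept}

lemma prodDFA_evalFrom (M1 : DFA Γ σ1) (M2 : DFA Γ σ2) (s : σ1 × σ2) (w : List Γ) :
    (prodDFA M1 M2).evalFrom s w = (M1.evalFrom s.1 w, M2.evalFrom s.2 w) := by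
  induction w generalizing s with
  | nil => rfl
  | cons a w ih => simpa [DFA.evalFrom, prodDFA] using ih (M1.step s.1 a, M2.step s.2 a)

lemma prodDFA_accepts (M1 : DFA Γ σ1) (M2 : DFA Γ σ2) :
    (prodDFA M1 M2).accepts = M1.accepts ⊓ M2.accepts := by
  ext w
  simp only [DFA.mem_accepts, DFA.eval]
  show (prodDFA M1 M2).evalFrom (M1.start, M2.start) w ∈ _ ↔ _
  rw [prodDFA_evalFrom]
  exact Iff.rfl

/-- Transport a DFA along an equivalence of state types. -/
def DFA.ofEquiv (M : DFA Γ σ) (e : σ ≃ σ2) : DFA Γ σ2 where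
  step t a := e (M.step (e.symm t) a)
  start := e M.start
  accept := e.symm ⁻¹' M.accept

lemma DFA.ofEquiv_evalFrom (M : DFA Γ σ) (e : σ ≃ σ2) (s : σ) (w : List Γ) :
    (M.ofEquiv e).evalFrom (e s) w = e (M.evalFrom s w) := by
  induction w generalizing s with
  | nil => rfl
  | cons a w ih => simpa [DFA.evalFrom, DFA.ofEquiv] using ih (M.step s a)

lemma DFA.ofEquiv_accepts (M : DFA Γ σ) (e : σ ≃ σ2) :
    (M.ofEquiv e).accepts = M.accepts := by
  ext w
  simp only [DFA.mem_accepts, DFA.eval]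
  show (M.ofEquiv e).evalFrom (e M.start) w ∈ _ ↔ _
  rw [DFA.ofEquiv_evalFrom]
  simp [DFA.ofEquiv]

lemma sc_le_card [Fintype σ] (M : DFA Γ σ) : sc M.accepts ≤ Fintype.card σ := by
  apply Nat.sInf_le
  exact ⟨M.ofEquiv (Fintype.equivFin σ), DFA.ofEquiv_accepts M _⟩

lemma recognizedBy_sc {L : Language Γ} (h : ∃ m, recognizedBy L m) :
    recognizedBy L (sc L) := Nat.sInf_mem h

/-- A 2-state DFA for the language `{ε}`. -/
def epsDFA (Γ : Type) : DFA Γ (Fin 2) where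
  step _ _ := 1
  start := 0
  accept := {0}

lemma epsDFA_accepts (Γ : Type) : (epsDFA Γ).accepts = 1 := by
  have key : ∀ w : List Γ, (epsDFA Γ).evalFrom 1 w = 1 := by
    intro w; induction w with
    | nil => rfl
    | cons a w ih => simpa [DFA.evalFrom, epsDFA] using ih
  ext w
  simp only [DFA.mem_accepts, Language.mem_one]
  cases w with
  | nil => simp [epsDFA, DFA.eval, DFA.evalFrom]
  | cons a w =>
    have h1 : (epsDFA Γ).evalFrom (epsDFA Γ).start (a :: w) = 1 := by
      simpa [DFA.evalFrom, epsDFA] using key w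
    simp only [DFA.mem_accepts, DFA.eval]
    rw [h1]
    simp [epsDFA]

end Basic

section Star

variable {Γ : Type} {σ : Type} [DecidableEq σ]

open Classical in
/-- One step of the subset construction for the Kleene star. -/
noncomputable def starStep (M : DFA Γ σ) (S : Finset σ) (a : Γ) : Finset σ :=
  if ∃ q ∈ S.image (fun q => M.step q a), q ∈ M.accept then
    insert M.start (S.image (fun q => M.step q a))
  else S.image (fun q => M.step q a)

noncomputable def starEval (M : DFA Γ σ) (S : Finset σ) (w : List Γ) : Finset σ :=
  w.foldl (starStep M) S

lemma starEval_nil (M : DFA Γ σ) (S : Finset σ) : starEval M S [] = S := rfl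

lemma starEval_append (M : DFA Γ σ) (S : Finset σ) (w v : List Γ) :
    starEval M S (w ++ v) = starEval M (starEval M S w) v :=
  List.foldl_append ..

lemma starStep_nonempty (M : DFA Γ σ) {S : Finset σ} (h : S.Nonempty) (a : Γ) :
    (starStep M S a).Nonempty := by
  unfold starStep
  split
  · exact Finset.insert_nonempty _ _
  · exact h.image _

lemma starStep_accept (M : DFA Γ σ) (S : Finset σ) (a : Γ)
    (h : ∃ q ∈ starStep M S a, q ∈ M.accept) : M.start ∈ starStep M S a := by
  unfold starStep at *
  split at h
  · rw [if_pos (by assumption)]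
    exact Finset.mem_insert_self _ _
  · exact absurd h (by assumption)

/-- Membership characterization for the star subset construction. -/
lemma starEval_mem (M : DFA Γ σ) (w : List Γ) (q : σ) :
    q ∈ starEval M {M.start} w ↔
      (∃ u v, u ++ v = w ∧ u ∈ M.accepts∗ ∧ v ≠ [] ∧ M.evalFrom M.start v = q) ∨
      (q = M.start ∧ w ∈ M.accepts∗) := by
  induction w using List.reverseRecOn generalizing q with
  | nil =>
    simp only [starEval_nil, Finset.mem_singleton]
    constructor
    · rintro rfl
      exact Or.inr ⟨rfl, Language.nil_mem_kstar _⟩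
    · rintro (⟨u, v, huv, _, hv, _⟩ | ⟨rfl, _⟩)
      · exact absurd (List.append_eq_nil_iff.mp huv).2 hv
      · rfl
  | append_singleton w a ih =>
    rw [starEval_append]
    -- characterize T = image of step over starEval M {M.start} w
    have hT : ∀ r : σ, (r ∈ (starEval M {M.start} w).image (fun p => M.step p a)) ↔
        (∃ u v, u ++ v = w ++ [a] ∧ u ∈ M.accepts∗ ∧ v ≠ [] ∧ M.evalFrom M.start v = r) := by
      intro r
      constructor
      · rintro hr
        rcases Finset.mem_image.mp hr with ⟨p, hp, rfl⟩
        rcases (ih p).mp hp with ⟨u, v, huv, hu, hv, hev⟩ | ⟨rfl, hw⟩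
        · refine ⟨u, v ++ [a], by rw [← List.append_assoc, huv], hu, by simp, ?_⟩
          rw [DFA.evalFrom_append_singleton, hev]
        · exact ⟨w, [a], rfl, hw, by simp, rfl⟩
      · rintro ⟨u, v, huv, hu, hv, hev⟩
        rcases v.eq_nil_or_concat' with rfl | ⟨v', b, rfl⟩
        · exact absurd rfl hv
        · rw [← List.append_assoc] at huv
          obtain ⟨huv', hb⟩ := List.append_inj' huv rfl
          have hb' : b = a := by simpa using hb
          subst hb' huv'
          have hp : M.evalFrom M.start v' ∈ starEval M {M.start} (u ++ v') := by
            apply (ih _).mpr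
            rcases v'.eq_nil_or_concat' with rfl | hne
            · right
              refine ⟨rfl, by simpa using hu⟩
            · left
              refine ⟨u, v', rfl, hu, ?_, rfl⟩
              rcases hne with ⟨_, _, rfl⟩
              simp
          refine Finset.mem_image.mpr ⟨_, hp, ?_⟩
          rw [← hev, DFA.evalFrom_append_singleton]
    -- now the full step including the possible insertion of the start state
    show q ∈ starStep M (starEval M {M.start} w) a ↔ _
    unfold starStep
    have hcond : (∃ r ∈ (starEval M {M.start} w).image (fun p => M.step p a), r ∈ M.accept) ↔
        (w ++ [a]) ∈ M.accepts∗ := by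
      constructor
      · rintro ⟨r, hr, hacc⟩
        rcases (hT r).mp hr with ⟨u, v, huv, hu, hv, hev⟩
        have hvL : v ∈ M.accepts := by
          show M.evalFrom M.start v ∈ M.accept
          rw [hev]; exact hacc
        rw [← huv]
        rcases Language.mem_kstar.mp hu with ⟨ll, rfl, hll⟩
        have : ll.flatten ++ v = (ll ++ [v]).flatten := by simp
        rw [this]
        refine Language.join_mem_kstar ?_
        intro y hy
        rcases List.mem_append.mp hy with h | h
        · exact hll y h
        · simp at h; subst h; exact hvL
      · intro hmem
        rcases Language.mem_kstar_iff_exists_nonempty.mp hmem with ⟨S, hS, hSmem⟩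
        rcases S.eq_nil_or_concat' with rfl | ⟨S', v, rfl⟩
        · simp at hS
        · have hv := hSmem v (by simp)
          refine ⟨M.evalFrom M.start v, (hT _).mpr ⟨S'.flatten, v, ?_, ?_, hv.2, rfl⟩, ?_⟩
          · rw [hS]; simp
          · exact Language.join_mem_kstar (fun y hy => (hSmem y (by simp [hy])).1)
          · exact (DFA.mem_accepts _).mp hv.1
    split
    · rename_i hyes
      rw [Finset.mem_insert]
      constructor
      · rintro (rfl | hq)
        · exact Or.inr ⟨rfl, hcond.mp hyes⟩
        · exact Or.inl ((hT q).mp hq)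
      · rintro (h1 | ⟨rfl, _⟩)
        · exact Or.inr ((hT q).mpr h1)
        · exact Or.inl rfl
    · rename_i hno
      rw [hT q]
      constructor
      · exact Or.inl
      · rintro (h1 | ⟨rfl, hW⟩)
        · exact h1
        · exact absurd (hcond.mpr hW) hno

end Star

section Star2
variable {Γ : Type} {σ : Type} [DecidableEq σ]

lemma append_mem_kstar {l : Language Γ} {u v : List Γ} (hu : u ∈ l∗) (hv : v ∈ l) :
    u ++ v ∈ l∗ := by
  rcases Language.mem_kstar.mp hu with ⟨ll, rfl, hll⟩
  have : ll.flatten ++ v = (ll ++ [v]).flatten := by simp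
  rw [this]
  refine Language.join_mem_kstar ?_
  intro y hy
  rcases List.mem_append.mp hy with h | h
  · exact hll y h
  · simp at h; subst h; exact hv

lemma mem_kstar_ne_nil {l : Language Γ} {x : List Γ} (hx : x ∈ l∗) (hne : x ≠ []) :
    ∃ u v, u ++ v = x ∧ u ∈ l∗ ∧ v ∈ l ∧ v ≠ [] := by
  rcases Language.mem_kstar_iff_exists_nonempty.mp hx with ⟨S, rfl, hS⟩
  rcases S.eq_nil_or_concat' with rfl | ⟨S', v, rfl⟩
  · simp at hne
  · have hv := hS v (by simp)
    refine ⟨S'.flatten, v, by simp, ?_, hv.1, hv.2⟩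
    exact Language.join_mem_kstar (fun y hy => (hS y (by simp [hy])).1)

/-- The subset-construction DFA for the Kleene star (unrestricted state space). -/
noncomputable def starDFA (M : DFA Γ σ) : DFA Γ (Option (Finset σ)) where
  step x a := some (starStep M (x.getD {M.start}) a)
  start := none
  accept := {x | x.elim True (fun S => ∃ q ∈ S, q ∈ M.accept)}

lemma starDFA_evalFrom_some (M : DFA Γ σ) (S : Finset σ) (w : List Γ) :
    (starDFA M).evalFrom (some S) w = some (starEval M S w) := by
  induction w generalizing S with
  | nil => rfl
  | cons a w ih => simpa [DFA.evalFrom, starDFA, starEval] using ih (starStep M S a)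

lemma starDFA_accepts (M : DFA Γ σ) : (starDFA M).accepts = M.accepts∗ := by
  ext w
  simp only [DFA.mem_accepts, DFA.eval]
  cases w with
  | nil =>
    simp only [DFA.evalFrom]
    constructor
    · intro _; exact Language.nil_mem_kstar _
    · intro _; trivial
  | cons a w =>
    have h1 : (starDFA M).evalFrom (starDFA M).start (a :: w) =
        some (starEval M {M.start} (a :: w)) := by
      show (starDFA M).evalFrom ((starDFA M).step none a) w = _
      show (starDFA M).evalFrom (some (starStep M {M.start} a)) w = _
      rw [starDFA_evalFrom_some]
      rfl
    rw [h1]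
    show (∃ q ∈ starEval M {M.start} (a :: w), q ∈ M.accept) ↔ _
    constructor
    · rintro ⟨q, hq, hacc⟩
      rcases (starEval_mem M (a :: w) q).mp hq with ⟨u, v, huv, hu, hv, hev⟩ | ⟨rfl, hw⟩
      · have hvL : v ∈ M.accepts := by
          show M.evalFrom M.start v ∈ M.accept
          rw [hev]; exact hacc
        rw [← huv]
        exact append_mem_kstar hu hvL
      · exact hw
    · intro hw
      rcases mem_kstar_ne_nil hw (by simp) with ⟨u, v, huv, hu, hv, hvne⟩
      refine ⟨M.evalFrom M.start v, ?_, (DFA.mem_accepts _).mp hv⟩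
      exact (starEval_mem M (a :: w) _).mpr (Or.inl ⟨u, v, huv, hu, hvne, rfl⟩)

/-- Valid states of the star construction. -/
def validP (M : DFA Γ σ) : Option (Finset σ) → Prop :=
  fun x => x.elim True (fun S => S.Nonempty ∧ ((∃ q ∈ S, q ∈ M.accept) → M.start ∈ S))

lemma validP_step (M : DFA Γ σ) {x : Option (Finset σ)} (hx : validP M x) (a : Γ) :
    validP M (some (starStep M (x.getD {M.start}) a)) := by
  have hne : (x.getD {M.start}).Nonempty := by
    cases x with
    | none => exact Finset.singleton_nonempty _
    | some S => exact hx.1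
  exact ⟨starStep_nonempty M hne a, starStep_accept M _ a⟩

/-- The star DFA restricted to valid states. -/
noncomputable def starDFA' (M : DFA Γ σ) : DFA Γ {x : Option (Finset σ) // validP M x} where
  step x a := ⟨some (starStep M (x.val.getD {M.start}) a), validP_step M x.2 a⟩
  start := ⟨none, trivial⟩
  accept := {x | x.val ∈ (starDFA M).accept}

lemma starDFA'_evalFrom (M : DFA Γ σ) (x : {x : Option (Finset σ) // validP M x})
    (w : List Γ) :
    ((starDFA' M).evalFrom x w).val = (starDFA M).evalFrom x.val w := by
  induction w generalizing x with
  | nil => rfl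
  | cons a w ih =>
    show ((starDFA' M).evalFrom ((starDFA' M).step x a) w).val = _
    rw [ih]
    rfl

lemma starDFA'_accepts (M : DFA Γ σ) : (starDFA' M).accepts = M.accepts∗ := by
  rw [← starDFA_accepts]
  ext w
  simp only [DFA.mem_accepts, DFA.eval]
  have key : ((starDFA' M).evalFrom (starDFA' M).start w).val
      = (starDFA M).evalFrom (starDFA M).start w := starDFA'_evalFrom M _ w
  show ((starDFA' M).evalFrom (starDFA' M).start w).val ∈ (starDFA M).accept ↔ _
  rw [key]

end Star2

section Count
variable {Γ : Type} {σ : Type} [DecidableEq σ] [Fintype σ]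

open Finset in
lemma card_valid (M : DFA Γ σ) (f : σ) (hf : f ∈ M.accept) (hne : f ≠ M.start) :
    Nat.card {x : Option (Finset σ) // validP M x} ≤ 3 * 2 ^ (Fintype.card σ - 2) := by
  classical
  rw [Nat.card_eq_fintype_card]
  set m := Fintype.card σ with hm
  have hm2 : 2 ≤ m := Fintype.one_lt_card_iff_nontrivial.mpr ⟨⟨f, M.start, hne⟩⟩
  set Q : Finset σ → Prop :=
    fun S => S.Nonempty ∧ ((∃ q ∈ S, q ∈ M.accept) → M.start ∈ S) with hQ
  have e : {x : Option (Finset σ) // validP M x} ≃ Option {S : Finset σ // Q S} :=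
    { toFun := fun x => match x with
        | ⟨none, _⟩ => none
        | ⟨some S, h⟩ => some ⟨S, h⟩
      invFun := fun y => match y with
        | none => ⟨none, trivial⟩
        | some ⟨S, h⟩ => ⟨some S, h⟩
      left_inv := by rintro ⟨(_ | S), h⟩ <;> rfl
      right_inv := by rintro (_ | ⟨S, h⟩) <;> rfl }
  rw [Fintype.card_congr e, Fintype.card_option, Fintype.card_subtype]
  -- bound the filter
  have hsub : univ.filter Q ⊆
      (univ.filter (fun S : Finset σ => M.start ∈ S)) ∪
      (univ.filter (fun S : Finset σ => S.Nonempty ∧ M.start ∉ S ∧ f ∉ S)) := by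
    intro S hS
    rw [mem_filter] at hS
    by_cases hs : M.start ∈ S
    · exact mem_union_left _ (mem_filter.mpr ⟨mem_univ _, hs⟩)
    · refine mem_union_right _ (mem_filter.mpr ⟨mem_univ _, hS.2.1, hs, fun hfS => ?_⟩)
      exact hs (hS.2.2 ⟨f, hfS, hf⟩)
  have h1 : (univ.filter (fun S : Finset σ => M.start ∈ S)).card ≤ 2 ^ (m - 1) := by
    have := Finset.card_le_card_of_injOn (f := fun S : Finset σ => S.erase M.start)
      (s := univ.filter (fun S : Finset σ => M.start ∈ S))
      (t := (univ.erase M.start).powerset)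
      (fun S hS => mem_powerset.mpr (erase_subset_erase _ (subset_univ S)))
      (by
        intro S1 hS1 S2 hS2 h
        simp only [coe_filter, Set.mem_setOf_eq, mem_univ, true_and] at hS1 hS2
        dsimp only at h
        rw [← Finset.insert_erase hS1, h, Finset.insert_erase hS2])
    rwa [card_powerset, card_erase_of_mem (mem_univ _)] at this
  have h2 : (univ.filter (fun S : Finset σ => S.Nonempty ∧ M.start ∉ S ∧ f ∉ S)).card ≤
      2 ^ (m - 2) - 1 := by
    have hsub2 : univ.filter (fun S : Finset σ => S.Nonempty ∧ M.start ∉ S ∧ f ∉ S) ⊆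
        ((univ.erase M.start).erase f).powerset.erase ∅ := by
      intro S hS
      rw [mem_filter] at hS
      refine mem_erase.mpr ⟨Finset.nonempty_iff_ne_empty.mp hS.2.1, mem_powerset.mpr ?_⟩
      intro x hx
      exact mem_erase.mpr ⟨fun h => hS.2.2.2 (h ▸ hx), mem_erase.mpr
        ⟨fun h => hS.2.2.1 (h ▸ hx), mem_univ _⟩⟩
    have := Finset.card_le_card hsub2
    rwa [card_erase_of_mem (empty_mem_powerset _), card_powerset,
      card_erase_of_mem (mem_erase.mpr ⟨hne, mem_univ _⟩),
      card_erase_of_mem (mem_univ _)] at this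
  have hQcard : (univ.filter Q).card ≤ 2 ^ (m - 1) + (2 ^ (m - 2) - 1) :=
    le_trans (Finset.card_le_card hsub) (le_trans (Finset.card_union_le _ _)
      (Nat.add_le_add h1 h2))
  have hpow : 2 ^ (m - 1) = 2 ^ (m - 2) + 2 ^ (m - 2) := by
    rw [show m - 1 = (m - 2) + 1 by omega, pow_succ]
    ring
  have hpos : 1 ≤ 2 ^ (m - 2) := Nat.one_le_two_pow
  have hrw : univ.filter (fun x => Q x) = univ.filter Q := rfl
  rw [hrw]
  omega

end Count

section Special
variable {Γ : Type} {σ : Type}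

lemma kstar_accepts_of_accept_singleton (M : DFA Γ σ) (h : M.accept = {M.start}) :
    M.accepts∗ = M.accepts := by
  have hstart : ∀ x ∈ M.accepts, M.evalFrom M.start x = M.start := by
    intro x hx
    have : M.evalFrom M.start x ∈ M.accept := hx
    rwa [h, Set.mem_singleton_iff] at this
  have key : ∀ ll : List (List Γ), (∀ y ∈ ll, y ∈ M.accepts) → ll.flatten ∈ M.accepts := by
    intro ll
    induction ll with
    | nil =>
      intro _
      show M.evalFrom M.start [] ∈ M.accept
      rw [h]; rfl
    | cons x ll ih =>
      intro hll
      show M.evalFrom M.start (x ++ ll.flatten) ∈ M.accept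
      rw [DFA.evalFrom_of_append, hstart x (hll x (by simp))]
      exact ih (fun y hy => hll y (by simp [hy]))
  ext w
  constructor
  · intro hw
    rcases Language.mem_kstar.mp hw with ⟨ll, rfl, hll⟩
    exact key ll hll
  · intro hw
    exact Language.mem_kstar.mpr ⟨[w], by simp, by simpa using hw⟩

lemma accepts_empty (M : DFA Γ σ) (h : M.accept = ∅) : M.accepts = 0 := by
  ext w
  simp [DFA.mem_accepts, h]

lemma le_three_mul_pow {m : ℕ} (hm : 4 ≤ m) : m ≤ 3 * 2 ^ (m - 2) := by
  induction m, hm using Nat.le_induction with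
  | base => norm_num
  | succ m hm ih =>
    have hpow : 2 ^ (m + 1 - 2) = 2 ^ (m - 2) + 2 ^ (m - 2) := by
      rw [show m + 1 - 2 = (m - 2) + 1 by omega, pow_succ]
      ring
    have hpos : 1 ≤ 2 ^ (m - 2) := Nat.one_le_two_pow
    omega

end Special

/-- for regular languages `L1, L2` over a common finite alphabet with
`sc L1 ≤ n1` and `sc L2 ≤ n2` (where `n1, n2 ≥ 2`), the state complexity of the
Kleene star of their intersection is at most `3 · 2 ^ (n1·n2 - 2)`. -/
theorem stmt1 (n1 n2 : ℕ) (h1 : 2 ≤ n1) (h2 : 2 ≤ n2)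
    (Γ : Type) [Fintype Γ] (L1 L2 : Language Γ)
    (hreg1 : ∃ m, recognizedBy L1 m) (hreg2 : ∃ m, recognizedBy L2 m)
    (hsc1 : sc L1 ≤ n1) (hsc2 : sc L2 ≤ n2) :
    sc ((L1 ⊓ L2)∗) ≤ 3 * 2 ^ (n1 * n2 - 2) := by
  classical
  obtain ⟨M1, hM1⟩ := recognizedBy_sc hreg1
  obtain ⟨M2, hM2⟩ := recognizedBy_sc hreg2
  set P := prodDFA M1 M2 with hPdef
  have hP : P.accepts = L1 ⊓ L2 := by rw [hPdef, prodDFA_accepts, hM1, hM2]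
  have hk : Fintype.card (Fin (sc L1) × Fin (sc L2)) ≤ n1 * n2 := by
    rw [Fintype.card_prod, Fintype.card_fin, Fintype.card_fin]
    exact Nat.mul_le_mul hsc1 hsc2
  have hbound4 : 4 ≤ n1 * n2 := Nat.mul_le_mul h1 h2
  have hmono : (3 : ℕ) * 2 ^ (Fintype.card (Fin (sc L1) × Fin (sc L2)) - 2) ≤
      3 * 2 ^ (n1 * n2 - 2) :=
    Nat.mul_le_mul_left _ (Nat.pow_le_pow_right (by norm_num) (Nat.sub_le_sub_right hk 2))
  by_cases hcase : ∃ f ∈ P.accept, f ≠ P.start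
  · obtain ⟨f, hf, hfne⟩ := hcase
    have hA : sc ((L1 ⊓ L2)∗) ≤
        Fintype.card {x : Option (Finset (Fin (sc L1) × Fin (sc L2))) // validP P x} := by
      have := sc_le_card (starDFA' P)
      rwa [starDFA'_accepts, hP] at this
    have hB := card_valid P f hf hfne
    rw [Nat.card_eq_fintype_card] at hB
    exact le_trans (le_trans hA hB) hmono
  · push_neg at hcase
    have hsub : P.accept ⊆ {P.start} := fun x hx => hcase x hx
    rcases Set.subset_singleton_iff_eq.mp hsub with hA | hA
    · -- accept set is empty, so L1 ⊓ L2 = 0 and the star is {ε}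
      have hz : P.accepts = 0 := accepts_empty P hA
      have hL : L1 ⊓ L2 = 0 := by rw [← hP, hz]
      rw [hL, kstar_zero]
      have hsc : sc (1 : Language Γ) ≤ 2 :=
        Nat.sInf_le (⟨epsDFA Γ, epsDFA_accepts Γ⟩ : recognizedBy 1 2)
      refine le_trans hsc ?_
      have h4 : (4 : ℕ) ≤ 2 ^ (n1 * n2 - 2) := by
        calc (4 : ℕ) = 2 ^ 2 := rfl
          _ ≤ 2 ^ (n1 * n2 - 2) := Nat.pow_le_pow_right (by norm_num) (by omega)
      omega
    · -- accept set is exactly the start state, so the star equals the language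
      have hks : P.accepts∗ = P.accepts := kstar_accepts_of_accept_singleton P hA
      have hsc : sc ((L1 ⊓ L2)∗) ≤ Fintype.card (Fin (sc L1) × Fin (sc L2)) := by
        have := sc_le_card P
        rw [hP] at this
        rwa [← hP, ← hks, hP] at this
      refine le_trans hsc (le_trans hk (le_three_mul_pow hbound4))
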